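/- Let R be an integral domain such that for every maximal ideal M of R, the intersection of all powers M^n (n ≥ 0) is zero. Then every nonzero ideal of R is unit-cancellative. -/

import Mathlib

/-- If a domain satisfies the conclusion of the Krull intersection theorem
(⋂ₙ Mⁿ = 0 for every maximal ideal M), then every nonzero ideal is
unit-cancellative. -/
theorem stmt_5 {R : Type*} [CommRing R] [IsDomain R]
    (hKrull : ∀ M : Ideal R, M.IsMaximal → (⨅ n : ℕ, M ^ n) = ⊥) :
    ∀ I : Ideal R, I ≠ ⊥ → ∀ J : Ideal R, I = I * J → J = ⊤ := by
  intro I hI J hIJ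
  by_contra hJ
  obtain ⟨M, hM, hJM⟩ := Ideal.exists_le_maximal J hJ
  have hpow : ∀ n : ℕ, I = I * J ^ n := by
    intro n
    induction n with
    | zero => simp
    | succ n ih =>
      calc I = I * J := hIJ
      _ = (I * J ^ n) * J := by rw [← ih]
      _ = I * J ^ (n + 1) := by ring
  have hle : I ≤ ⨅ n : ℕ, M ^ n := by
    refine le_iInf fun n => ?_
    calc I = I * J ^ n := hpow n
    _ ≤ J ^ n := Ideal.mul_le_right
    _ ≤ M ^ n := Ideal.pow_right_mono hJM n
  rw [hKrull M hM, le_bot_iff] at hle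
  exact hI hle
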